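/- arXiv:2305.10737 — 3 statements merged into one kernel-verified Lean document; each statement's English description precedes it below -/
import Mathlib

section
/- Let u : [0,T] × ℝ → ℝⁿ be an entropy-admissible weak solution of u_t + f(u)_x = 0 taking values in the compact set K ⊆ Ω, where (η,q) is an entropy pair for f and η is strictly convex with constant c₀ > 0. Assume moreover that for each t ∈ [0,T] the function x ↦ u(t,x) is right-continuous and of bounded variation. Let λ̂ > 0 be a constant for which the finite-propagation estimate of Lemma 2.1 holds. Then there exists a constant C > 0, depending only on f, η, q, K and c₀, such that for every τ ∈ [0,T], every −∞ ≤ a < b ≤ +∞, and every t ∈ (τ, T] with 2λ̂(t−τ) < b − a, one has ∫_{a+λ̂(t−τ)}^{b−λ̂(t−τ)} |u(t,x) − u(τ,x)| dx ≤ C (t−τ) · Tot.Var.{u(τ,·); (a,b)}. -/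
open MeasureTheory Filter


private lemma interval_est {n : ℕ} (v w : ℝ → EuclideanSpace ℝ (Fin n))
    (hv : Measurable v) (hw : Measurable w)
    (D : ℝ) (hDw : ∀ x y, ‖w x - v y‖ ≤ D)
    (δ Chat : ℝ) (hδ : 0 < δ) (hChat : 0 < Chat)
    (hfin : eVariationOn v Set.univ ≠ ⊤)
    (hprop : ∀ c d : ℝ, c < d → 2*δ < d - c →
       ∫ x in Set.Icc (c+δ) (d-δ), ‖w x - v d‖^2 ≤ Chat * ∫ x in Set.Icc c d, ‖v x - v d‖^2)
    (c d : ℝ) (h1 : 2*δ < d - c) (h2 : d - c ≤ 4*δ) :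
    ∫ x in Set.Icc (c+δ) (d-δ), ‖w x - v x‖ ≤
      (2*Chat+3) * δ * (eVariationOn v (Set.Icc c d)).toReal := by
  have hcd : c < d := by linarith
  set V := eVariationOn v (Set.Icc c d) with hVdef
  have hVfin : V ≠ ⊤ := by
    intro h
    exact hfin (top_le_iff.mp (h ▸ eVariationOn.mono v (Set.subset_univ _)))
  set Vr := V.toReal with hVrdef
  have hVr0 : 0 ≤ Vr := ENNReal.toReal_nonneg
  have hd_mem : d ∈ Set.Icc c d := ⟨hcd.le, le_rfl⟩
  have hpt : ∀ x ∈ Set.Icc c d, ‖v x - v d‖ ≤ Vr := by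
    intro x hx
    have h := eVariationOn.edist_le v hx hd_mem
    have : dist (v x) (v d) ≤ Vr := by
      rw [dist_edist]
      exact ENNReal.toReal_mono hVfin h
    rwa [dist_eq_norm] at this
  have hEsub : Set.Icc (c+δ) (d-δ) ⊆ Set.Icc c d := Set.Icc_subset_Icc (by linarith) (by linarith)
  have hD0 : 0 ≤ D := le_trans (norm_nonneg _) (hDw c c)
  -- measurability
  have hmeas2 : Measurable fun x => ‖w x - v d‖^2 := ((hw.sub measurable_const).norm.pow_const 2)
  have hvolE : volume (Set.Icc (c+δ) (d-δ)) < ⊤ := by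
    rw [Real.volume_Icc]; exact ENNReal.ofReal_lt_top
  have hvolCD : volume (Set.Icc c d) < ⊤ := by
    rw [Real.volume_Icc]; exact ENNReal.ofReal_lt_top
  -- step 1 : the L² bound on [c,d]
  have step1 : ∫ x in Set.Icc c d, ‖v x - v d‖^2 ≤ Vr^2 * (d - c) := by
    have hb : ∀ x ∈ Set.Icc c d, ‖‖v x - v d‖^2‖ ≤ Vr^2 := by
      intro x hx
      rw [Real.norm_eq_abs, abs_of_nonneg (by positivity)]
      exact pow_le_pow_left₀ (norm_nonneg _) (hpt x hx) 2
    have := norm_setIntegral_le_of_norm_le_const (μ := volume) hvolCD hb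
    calc ∫ x in Set.Icc c d, ‖v x - v d‖^2
        ≤ ‖∫ x in Set.Icc c d, ‖v x - v d‖^2‖ := le_abs_self _
      _ ≤ Vr^2 * (volume (Set.Icc c d)).toReal := this
      _ = Vr^2 * (d - c) := by
          rw [Real.volume_Icc, ENNReal.toReal_ofReal (by linarith)]
  -- step 2 : the L² bound on E via propagation
  have step2 : ∫ x in Set.Icc (c+δ) (d-δ), ‖w x - v d‖^2 ≤ Chat * (Vr^2 * (d-c)) :=
    (hprop c d hcd h1).trans (by nlinarith [step1])
  have hI2 : IntegrableOn (fun x => ‖w x - v d‖^2) (Set.Icc (c+δ) (d-δ)) := by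
    apply Measure.integrableOn_of_bounded hvolE.ne hmeas2.aestronglyMeasurable (M := D^2)
    filter_upwards with x
    rw [Real.norm_eq_abs, abs_of_nonneg (by positivity)]
    exact pow_le_pow_left₀ (norm_nonneg _) (hDw x d) 2
  have hIg : IntegrableOn (fun x => ‖w x - v x‖) (Set.Icc (c+δ) (d-δ)) := by
    apply Measure.integrableOn_of_bounded hvolE.ne
      ((hw.sub hv).norm.aestronglyMeasurable) (M := D)
    filter_upwards with x
    rw [Real.norm_eq_abs, abs_of_nonneg (norm_nonneg _)]
    exact hDw x x
  rcases eq_or_lt_of_le hVr0 with hV0 | hVpos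
  · -- variation zero : everything coincides a.e.
    have hvconst : ∀ x ∈ Set.Icc c d, v x = v d := by
      intro x hx
      have := hpt x hx
      rw [← hV0] at this
      have : ‖v x - v d‖ = 0 := le_antisymm this (norm_nonneg _)
      rwa [norm_sub_eq_zero_iff] at this
    have hz : ∫ x in Set.Icc c d, ‖v x - v d‖^2 = 0 := by
      apply setIntegral_eq_zero_of_forall_eq_zero
      intro x hx
      rw [hvconst x hx, sub_self, norm_zero]; ring
    have hle0 : ∫ x in Set.Icc (c+δ) (d-δ), ‖w x - v d‖^2 ≤ 0 := by
      have := hprop c d hcd h1; rw [hz, mul_zero] at this; exact this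
    have hge0 : 0 ≤ ∫ x in Set.Icc (c+δ) (d-δ), ‖w x - v d‖^2 :=
      setIntegral_nonneg measurableSet_Icc (fun x _ => by positivity)
    have heq0 : ∫ x in Set.Icc (c+δ) (d-δ), ‖w x - v d‖^2 = 0 := le_antisymm hle0 hge0
    have hae : (fun x => ‖w x - v d‖^2) =ᶠ[ae (volume.restrict (Set.Icc (c+δ) (d-δ)))] 0 := by
      rw [← integral_eq_zero_iff_of_nonneg (fun x => by positivity) hI2]
      exact heq0
    have hae2 : (fun x => ‖w x - v x‖) =ᶠ[ae (volume.restrict (Set.Icc (c+δ) (d-δ)))] 0 := by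
      have hmem := ae_restrict_mem (μ := volume) (measurableSet_Icc : MeasurableSet (Set.Icc (c+δ) (d-δ)))
      filter_upwards [hae, hmem] with x hx hxm
      have hx2 : ‖w x - v d‖^2 = 0 := hx
      have h0 : ‖w x - v d‖ = 0 := by nlinarith [norm_nonneg (w x - v d)]
      have hwx : w x = v d := by rwa [norm_sub_eq_zero_iff] at h0
      show ‖w x - v x‖ = 0
      rw [hwx, hvconst x (hEsub hxm), sub_self, norm_zero]
    rw [integral_eq_zero_of_ae hae2]
    positivity
  · -- variation positive : AM-GM trick
    have hpt2 : ∀ x ∈ Set.Icc (c+δ) (d-δ),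
        ‖w x - v x‖ ≤ (2*Vr)⁻¹ * ‖w x - v d‖^2 + (Vr/2 + Vr) := by
      intro x hx
      have h3 : ‖v d - v x‖ ≤ Vr := by
        rw [norm_sub_rev]; exact hpt x (hEsub hx)
      have h4 : ‖w x - v d‖ ≤ (2*Vr)⁻¹ * ‖w x - v d‖^2 + Vr/2 := by
        have key : (2*Vr)⁻¹ * ‖w x - v d‖^2 + Vr/2 - ‖w x - v d‖
            = (‖w x - v d‖ - Vr)^2 / (2*Vr) := by
          field_simp; ring
        have h0 := div_nonneg (sq_nonneg (‖w x - v d‖ - Vr)) (by linarith : (0:ℝ) ≤ 2*Vr)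
        linarith [key ▸ h0]
      calc ‖w x - v x‖ ≤ ‖w x - v d‖ + ‖v d - v x‖ := norm_sub_le_norm_sub_add_norm_sub _ _ _
        _ ≤ ((2*Vr)⁻¹ * ‖w x - v d‖^2 + Vr/2) + Vr := add_le_add h4 h3
        _ = (2*Vr)⁻¹ * ‖w x - v d‖^2 + (Vr/2 + Vr) := by ring
    have hIrhs : IntegrableOn (fun x => (2*Vr)⁻¹ * ‖w x - v d‖^2 + (Vr/2 + Vr))
        (Set.Icc (c+δ) (d-δ)) := (hI2.const_mul _).add (integrableOn_const hvolE.ne)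
    have hmono := setIntegral_mono_on hIg hIrhs measurableSet_Icc hpt2
    have hsplit : ∫ x in Set.Icc (c+δ) (d-δ), ((2*Vr)⁻¹ * ‖w x - v d‖^2 + (Vr/2 + Vr))
        = (2*Vr)⁻¹ * (∫ x in Set.Icc (c+δ) (d-δ), ‖w x - v d‖^2)
          + (Vr/2 + Vr) * (volume (Set.Icc (c+δ) (d-δ))).toReal := by
      rw [integral_add (hI2.const_mul _) (integrableOn_const hvolE.ne),
        integral_const_mul, setIntegral_const, smul_eq_mul,
        mul_comm (volume.real (Set.Icc (c+δ) (d-δ))) (Vr/2 + Vr), measureReal_def]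
    have hvol : (volume (Set.Icc (c+δ) (d-δ))).toReal = d - δ - (c + δ) := by
      rw [Real.volume_Icc, ENNReal.toReal_ofReal (by linarith)]
    rw [hsplit, hvol] at hmono
    have hbound : (2*Vr)⁻¹ * (∫ x in Set.Icc (c+δ) (d-δ), ‖w x - v d‖^2)
          + (Vr/2 + Vr) * (d - δ - (c + δ)) ≤ (2*Chat+3) * δ * Vr := by
      have h5 : (2*Vr)⁻¹ * (∫ x in Set.Icc (c+δ) (d-δ), ‖w x - v d‖^2)
          ≤ (2*Vr)⁻¹ * (Chat * (Vr^2 * (d-c))) := by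
        apply mul_le_mul_of_nonneg_left step2 (by positivity)
      have h6 : (2*Vr)⁻¹ * (Chat * (Vr^2 * (d-c))) = Chat * Vr * (d-c) / 2 := by
        field_simp
      rw [h6] at h5
      have h7 : Chat * Vr * (d - c) / 2 ≤ 2 * Chat * δ * Vr := by
        nlinarith [mul_nonneg (mul_pos hChat hVpos).le (by linarith : (0:ℝ) ≤ 4*δ - (d-c))]
      have h8 : (Vr/2 + Vr) * (d - δ - (c+δ)) ≤ 3 * δ * Vr := by
        nlinarith [mul_nonneg hVr0 (by linarith : (0:ℝ) ≤ 2*δ - (d - δ - (c+δ)))]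
      nlinarith
    exact hmono.trans hbound

private lemma key_est {n : ℕ} (v w : ℝ → EuclideanSpace ℝ (Fin n))
    (hv : Measurable v) (hw : Measurable w)
    (D : ℝ) (hDw : ∀ x y, ‖w x - v y‖ ≤ D)
    (δ Chat : ℝ) (hδ : 0 < δ) (hChat : 0 < Chat)
    (hfin : eVariationOn v Set.univ ≠ ⊤)
    (hint : Integrable (fun x => ‖w x - v x‖))
    (hprop : ∀ c d : ℝ, c < d → 2*δ < d - c →
       ∫ x in Set.Icc (c+δ) (d-δ), ‖w x - v d‖^2 ≤ Chat * ∫ x in Set.Icc c d, ‖v x - v d‖^2)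
    (α β : ℝ) :
    ∫ x in Set.Icc α β, ‖w x - v x‖ ≤
      2*(2*Chat+3) * δ * (eVariationOn v (Set.Icc (α-δ) (β+δ))).toReal := by
  rcases le_or_gt α β with hab | hab
  swap
  · rw [Set.Icc_eq_empty (not_le.mpr hab), Measure.restrict_empty, integral_zero_measure]
    positivity
  set y : ℕ → ℝ := fun j => min (α + 2*δ*(j:ℝ)) β with hy
  set e : ℕ → ℝ := fun j => min (α + 2*δ*(j:ℝ) - δ) (β + δ) with he
  set M : ℕ := ⌈(β - α)/(2*δ)⌉₊ with hM
  have hjlt : ∀ j : ℕ, j < M → α + 2*δ*(j:ℝ) < β := by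
    intro j hj
    have := (Nat.lt_ceil).mp hj
    have h2 : (j:ℝ) * (2*δ) < β - α := (lt_div_iff₀ (by positivity)).mp this
    linarith
  have hyM : y M = β := by
    have := Nat.le_ceil ((β - α)/(2*δ))
    have h2 : β - α ≤ (M:ℝ) * (2*δ) := (div_le_iff₀ (by positivity)).mp this
    simp only [hy]
    exact min_eq_right (by linarith)
  have hy0 : y 0 = α := by simp [hy, hab]
  have ymono : Monotone y := by
    intro j k hjk
    exact min_le_min (by nlinarith [(Nat.cast_le (α := ℝ)).mpr hjk]) le_rfl
  have emono : Monotone e := by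
    intro j k hjk
    exact min_le_min (by nlinarith [(Nat.cast_le (α := ℝ)).mpr hjk]) le_rfl
  have hyj : ∀ j : ℕ, j < M → y j = α + 2*δ*(j:ℝ) := by
    intro j hj
    exact min_eq_left (hjlt j hj).le
  have hej : ∀ j : ℕ, j < M → e j = α + 2*δ*(j:ℝ) - δ := by
    intro j hj
    exact min_eq_left (by have := hjlt j hj; linarith)
  have hed : ∀ j : ℕ, e (j+2) = y (j+1) + δ := by
    intro j
    simp only [he, hy]
    rw [← min_add_add_right]
    congr 1 <;> (push_cast; ring)
  have he0 : e 0 = α - δ := by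
    simp only [he, Nat.cast_zero, mul_zero, add_zero]
    exact min_eq_left (by linarith)
  have heup : ∀ j, e j ≤ β + δ := fun j => min_le_right _ _
  -- per-interval estimate
  have hper : ∀ j : ℕ, j < M →
      ∫ x in Set.Icc (y j) (y (j+1)), ‖w x - v x‖ ≤
        (2*Chat+3) * δ * (eVariationOn v (Set.Icc (e j) (e (j+2)))).toReal := by
    intro j hj
    have hc : e j = α + 2*δ*(j:ℝ) - δ := hej j hj
    have hd : e (j+2) = y (j+1) + δ := hed j
    have hylb : α + 2*δ*(j:ℝ) < y (j+1) := by
      apply lt_min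
      · push_cast; nlinarith
      · exact hjlt j hj
    have hyub : y (j+1) ≤ α + 2*δ*((j:ℝ)+1) := by
      apply (min_le_left _ _).trans
      push_cast; linarith
    have h1 : 2*δ < e (j+2) - e j := by rw [hc, hd]; linarith
    have h2 : e (j+2) - e j ≤ 4*δ := by rw [hc, hd]; linarith
    have := interval_est v w hv hw D hDw δ Chat hδ hChat hfin hprop (e j) (e (j+2)) h1 h2
    have hcy : e j + δ = y j := by rw [hc, hyj j hj]; ring
    have hdy : e (j+2) - δ = y (j+1) := by rw [hd]; ring
    rwa [hcy, hdy] at this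
  -- sum the integrals
  have hsum1 : ∀ k : ℕ, ∫ x in Set.Ioc (y 0) (y k), ‖w x - v x‖ ≤
      ∑ j ∈ Finset.range k, ∫ x in Set.Icc (y j) (y (j+1)), ‖w x - v x‖ := by
    intro k
    induction k with
    | zero => simp
    | succ k ih =>
      have hunion : Set.Ioc (y 0) (y k) ∪ Set.Ioc (y k) (y (k+1)) = Set.Ioc (y 0) (y (k+1)) :=
        Set.Ioc_union_Ioc_eq_Ioc (ymono (Nat.zero_le k)) (ymono (Nat.le_succ k))
      rw [← hunion, setIntegral_union (Set.Ioc_disjoint_Ioc_of_le le_rfl) measurableSet_Ioc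
        hint.integrableOn hint.integrableOn, Finset.sum_range_succ]
      have hlast : ∫ x in Set.Ioc (y k) (y (k+1)), ‖w x - v x‖ ≤
          ∫ x in Set.Icc (y k) (y (k+1)), ‖w x - v x‖ := by
        apply setIntegral_mono_set hint.integrableOn
          (Eventually.of_forall (fun x => norm_nonneg _))
          (HasSubset.Subset.eventuallyLE Set.Ioc_subset_Icc_self)
      linarith [ih]
  -- variation bookkeeping
  set W : ℕ → ENNReal := fun j => eVariationOn v (Set.Icc (e j) (e (j+1))) with hW
  have hWfin : ∀ j, W j ≠ ⊤ := by
    intro j h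
    exact hfin (top_le_iff.mp (h ▸ eVariationOn.mono v (Set.subset_univ _)))
  have hVsplit : ∀ j : ℕ, eVariationOn v (Set.Icc (e j) (e (j+2))) = W j + W (j+1) := by
    intro j
    have := eVariationOn.Icc_add_Icc v (s := Set.univ) (emono (Nat.le_succ j))
      (emono (Nat.le_succ (j+1))) (Set.mem_univ (e (j+1)))
    simp only [Set.univ_inter] at this
    exact this.symm
  have hWsum : ∀ k : ℕ, ∑ j ∈ Finset.range k, W j = eVariationOn v (Set.Icc (e 0) (e k)) := by
    intro k
    induction k with
    | zero =>
      simp only [Finset.range_zero, Finset.sum_empty]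
      exact (eVariationOn.subsingleton v (by simp [Set.Subsingleton])).symm
    | succ k ih =>
      rw [Finset.sum_range_succ, ih]
      have := eVariationOn.Icc_add_Icc v (s := Set.univ) (emono (Nat.zero_le k))
        (emono (Nat.le_succ k)) (Set.mem_univ (e k))
      simp only [Set.univ_inter] at this
      exact this
  have hbig : eVariationOn v (Set.Icc (e 0) (e (M+1))) ≤
      eVariationOn v (Set.Icc (α-δ) (β+δ)) := by
    apply eVariationOn.mono
    apply Set.Icc_subset_Icc (le_of_eq he0.symm) (heup (M+1))
  have hBfin : eVariationOn v (Set.Icc (α-δ) (β+δ)) ≠ ⊤ := by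
    intro h
    exact hfin (top_le_iff.mp (h ▸ eVariationOn.mono v (Set.subset_univ _)))
  -- combine
  have hWsum_le : ∑ j ∈ Finset.range (M+1), (W j).toReal ≤
      (eVariationOn v (Set.Icc (α-δ) (β+δ))).toReal := by
    rw [← ENNReal.toReal_sum (fun j _ => hWfin j), hWsum (M+1)]
    exact ENNReal.toReal_mono hBfin hbig
  have hvar_le : ∑ j ∈ Finset.range M, (eVariationOn v (Set.Icc (e j) (e (j+2)))).toReal ≤
      2 * (eVariationOn v (Set.Icc (α-δ) (β+δ))).toReal := by
    have h1 : ∀ j ∈ Finset.range M, (eVariationOn v (Set.Icc (e j) (e (j+2)))).toReal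
        = (W j).toReal + (W (j+1)).toReal := by
      intro j _
      rw [hVsplit j, ENNReal.toReal_add (hWfin j) (hWfin (j+1))]
    rw [Finset.sum_congr rfl h1, Finset.sum_add_distrib]
    have h2 : ∑ j ∈ Finset.range M, (W j).toReal ≤ ∑ j ∈ Finset.range (M+1), (W j).toReal := by
      apply Finset.sum_le_sum_of_subset_of_nonneg (Finset.range_subset_range.mpr (Nat.le_succ M))
      intro j _ _; exact ENNReal.toReal_nonneg
    have h3 : ∑ j ∈ Finset.range M, (W (j+1)).toReal ≤ ∑ j ∈ Finset.range (M+1), (W j).toReal := by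
      rw [Finset.sum_range_succ' (fun j => (W j).toReal) M]
      have h0 := ENNReal.toReal_nonneg (a := W 0)
      linarith
    linarith [hWsum_le]
  calc ∫ x in Set.Icc α β, ‖w x - v x‖
      = ∫ x in Set.Ioc (y 0) (y M), ‖w x - v x‖ := by
        rw [hy0, hyM, integral_Icc_eq_integral_Ioc]
    _ ≤ ∑ j ∈ Finset.range M, ∫ x in Set.Icc (y j) (y (j+1)), ‖w x - v x‖ := hsum1 M
    _ ≤ ∑ j ∈ Finset.range M, (2*Chat+3) * δ * (eVariationOn v (Set.Icc (e j) (e (j+2)))).toReal := by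
        apply Finset.sum_le_sum
        intro j hj
        exact hper j (Finset.mem_range.mp hj)
    _ = (2*Chat+3) * δ * ∑ j ∈ Finset.range M, (eVariationOn v (Set.Icc (e j) (e (j+2)))).toReal := by
        rw [Finset.mul_sum]
    _ ≤ (2*Chat+3) * δ * (2 * (eVariationOn v (Set.Icc (α-δ) (β+δ))).toReal) := by
        apply mul_le_mul_of_nonneg_left hvar_le (by positivity)
    _ = 2*(2*Chat+3) * δ * (eVariationOn v (Set.Icc (α-δ) (β+δ))).toReal := by ring


private lemma lim_aux (g : ℝ → ℝ) (hg : Integrable g) (hg0 : ∀ x, 0 ≤ g x)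
    (R : Set ℝ)
    (s : ℕ → Set ℝ) (hs : ∀ k, MeasurableSet (s k)) (hmono : Monotone s)
    (hnull : volume (R \ ⋃ k, s k) = 0)
    (B : ℝ) (hB : ∀ k, ∫ x in s k, g x ≤ B) :
    ∫ x in R, g x ≤ B := by
  have h1 : ∫ x in R, g x ≤ ∫ x in R ∪ ⋃ k, s k, g x :=
    setIntegral_mono_set hg.integrableOn
      (Eventually.of_forall (fun x => hg0 x))
      (HasSubset.Subset.eventuallyLE Set.subset_union_left)
  have h2 : ∫ x in R ∪ ⋃ k, s k, g x = ∫ x in ⋃ k, s k, g x := by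
    apply setIntegral_congr_set
    rw [MeasureTheory.ae_eq_set]
    constructor
    · apply measure_mono_null _ hnull
      intro x hx
      exact ⟨hx.1.resolve_right hx.2, hx.2⟩
    · rw [Set.diff_eq_empty.mpr Set.subset_union_right]
      exact measure_empty
  have h3 := tendsto_setIntegral_of_monotone hs hmono hg.integrableOn
  exact h1.trans (h2 ▸ le_of_tendsto' h3 hB)

noncomputable section

/-- A `C¹` test function with compact support contained in the open strip `(0,T) × ℝ`. -/
def IsTestFun (T : ℝ) (φ : ℝ × ℝ → ℝ) : Prop :=
  ContDiff ℝ 1 φ ∧ HasCompactSupport φ ∧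
    tsupport φ ⊆ Set.Ioo 0 T ×ˢ (Set.univ : Set ℝ)

/-- `u` is a weak solution of `u_t + f(u)_x = 0` on `[0,T] × ℝ` taking values in `K`,
with `t ↦ u(t,·)` continuous into `L¹`. -/
def IsWeakSolution (n : ℕ) (T : ℝ) (K : Set (EuclideanSpace ℝ (Fin n)))
    (f : EuclideanSpace ℝ (Fin n) → EuclideanSpace ℝ (Fin n))
    (u : ℝ → ℝ → EuclideanSpace ℝ (Fin n)) : Prop :=
  (∀ t ∈ Set.Icc (0 : ℝ) T, ∀ x : ℝ, u t x ∈ K) ∧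
  (∀ t : ℝ, Measurable (u t)) ∧
  (∀ s ∈ Set.Icc (0 : ℝ) T, ∀ t ∈ Set.Icc (0 : ℝ) T,
    Integrable (fun x : ℝ => u t x - u s x)) ∧
  (∀ t₀ ∈ Set.Icc (0 : ℝ) T,
    Tendsto (fun t : ℝ => ∫ x : ℝ, ‖u t x - u t₀ x‖)
      (nhdsWithin t₀ (Set.Icc 0 T)) (nhds 0)) ∧
  (∀ φ : ℝ × ℝ → ℝ, IsTestFun T φ →
    (∫ p : ℝ × ℝ, ((fderiv ℝ φ p (1, 0)) • u p.1 p.2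
        + (fderiv ℝ φ p (0, 1)) • f (u p.1 p.2))) = 0)

/-- The entropy admissibility condition for the entropy pair `(η, q)`. -/
def IsEntropyAdmissible (n : ℕ) (T : ℝ)
    (η q : EuclideanSpace ℝ (Fin n) → ℝ)
    (u : ℝ → ℝ → EuclideanSpace ℝ (Fin n)) : Prop :=
  ∀ φ : ℝ × ℝ → ℝ, IsTestFun T φ → (∀ p, 0 ≤ φ p) →
    0 ≤ ∫ p : ℝ × ℝ, (η (u p.1 p.2) * fderiv ℝ φ p (1, 0)
        + q (u p.1 p.2) * fderiv ℝ φ p (0, 1))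

/-- At each time `t ∈ [0,T]`, the profile `x ↦ u(t,x)` is right-continuous and
of bounded variation. -/
def RightContBV (n : ℕ) (T : ℝ) (u : ℝ → ℝ → EuclideanSpace ℝ (Fin n)) : Prop :=
  ∀ t ∈ Set.Icc (0 : ℝ) T,
    (∀ x : ℝ, ContinuousWithinAt (u t) (Set.Ici x) x) ∧
    BoundedVariationOn (u t) Set.univ

theorem stmt_4 (n : ℕ) (hn : 1 ≤ n)
    (Ω : Set (EuclideanSpace ℝ (Fin n))) (hΩ : IsOpen Ω)
    (K : Set (EuclideanSpace ℝ (Fin n))) (hK : IsCompact K) (hKΩ : K ⊆ Ω)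
    (f : EuclideanSpace ℝ (Fin n) → EuclideanSpace ℝ (Fin n))
    (hf : ContDiffOn ℝ 2 f Ω)
    (η q : EuclideanSpace ℝ (Fin n) → ℝ)
    (hη : ContDiffOn ℝ 2 η Ω) (hq : ContDiffOn ℝ 2 q Ω)
    (hpair : ∀ ω ∈ Ω, ∀ v, fderiv ℝ q ω v = fderiv ℝ η ω (fderiv ℝ f ω v))
    (c₀ : ℝ) (hc₀ : 0 < c₀)
    (hconv : ∀ ω ∈ Ω, ∀ ω' ∈ Ω,
      η ω' ≥ η ω + fderiv ℝ η ω (ω' - ω) + c₀ * ‖ω' - ω‖ ^ 2)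
    (T : ℝ) (hT : 0 < T)
    (lhat : ℝ) (hlhat : 0 < lhat) (Chat : ℝ) (hChat : 0 < Chat)
    -- `λ̂` is a constant for which the finite-propagation estimate of Lemma 2.1 holds
    (hlem : ∀ u : ℝ → ℝ → EuclideanSpace ℝ (Fin n),
      IsWeakSolution n T K f u → IsEntropyAdmissible n T η q u → RightContBV n T u →
      ∀ ustar ∈ K, ∀ a b : ℝ, a < b →
      ∀ τ τ' : ℝ, 0 ≤ τ → τ < τ' → τ' ≤ T → 2 * lhat * (τ' - τ) < b - a →
        ∫ x in Set.Icc (a + lhat * (τ' - τ)) (b - lhat * (τ' - τ)),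
            ‖u τ' x - ustar‖ ^ 2
          ≤ Chat * ∫ x in Set.Icc a b, ‖u τ x - ustar‖ ^ 2) :
    ∃ C > (0 : ℝ), ∀ u : ℝ → ℝ → EuclideanSpace ℝ (Fin n),
      IsWeakSolution n T K f u → IsEntropyAdmissible n T η q u → RightContBV n T u →
      ∀ τ ∈ Set.Icc (0 : ℝ) T, ∀ a b : EReal, a < b →
      ∀ t : ℝ, τ < t → t ≤ T →
      ((2 * lhat * (t - τ) : ℝ) : EReal) < b - a →
        ∫ x in {x : ℝ | a + ((lhat * (t - τ) : ℝ) : EReal) ≤ (x : EReal) ∧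
            (x : EReal) ≤ b - ((lhat * (t - τ) : ℝ) : EReal)},
          ‖u t x - u τ x‖
          ≤ C * (t - τ) *
            (eVariationOn (u τ) {x : ℝ | a < (x : EReal) ∧ (x : EReal) < b}).toReal := by
  refine ⟨2*(2*Chat+3)*lhat, by positivity, ?_⟩
  intro u hws hea hbv τ hτmem a b hab t hτt htT h2δ
  obtain ⟨hτ0, hτT⟩ := hτmem
  have ht0 : (0:ℝ) ≤ t := le_trans hτ0 hτt.le
  set δ : ℝ := lhat * (t - τ) with hδdef
  have hδ : 0 < δ := mul_pos hlhat (by linarith)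
  have hv : Measurable (u τ) := hws.2.1 τ
  have hw : Measurable (u t) := hws.2.1 t
  have hg : Integrable (fun x => ‖u t x - u τ x‖) :=
    (hws.2.2.1 τ ⟨hτ0, hτT⟩ t ⟨ht0, htT⟩).norm
  obtain ⟨D, hD⟩ := Metric.isBounded_iff.mp hK.isBounded
  have hDw : ∀ x y, ‖u t x - u τ y‖ ≤ D := fun x y => by
    rw [← dist_eq_norm]
    exact hD (hws.1 t ⟨ht0, htT⟩ x) (hws.1 τ ⟨hτ0, hτT⟩ y)
  have hfin : eVariationOn (u τ) Set.univ ≠ ⊤ := (hbv τ ⟨hτ0, hτT⟩).2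
  have hprop : ∀ c d : ℝ, c < d → 2*δ < d - c →
      ∫ x in Set.Icc (c+δ) (d-δ), ‖u t x - u τ d‖^2
        ≤ Chat * ∫ x in Set.Icc c d, ‖u τ x - u τ d‖^2 := by
    intro c d h1 h2
    have h3 : 2 * lhat * (t - τ) < d - c := by
      have : 2 * lhat * (t - τ) = 2 * δ := by rw [hδdef]; ring
      linarith [this]
    have := hlem u hws hea hbv (u τ d) (hws.1 τ ⟨hτ0, hτT⟩ d) c d h1 τ t hτ0 hτt htT h3
    rw [hδdef]
    exact this
  have hkey := key_est (u τ) (u t) hv hw D hDw δ Chat hδ hChat hfin hg hprop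
  have hVS : ∀ S : Set ℝ, eVariationOn (u τ) S ≠ ⊤ := fun S h =>
    hfin (top_le_iff.mp (h ▸ eVariationOn.mono (u τ) (Set.subset_univ _)))
  have hstep : ∀ (α β : ℝ) (S : Set ℝ), Set.Icc (α-δ) (β+δ) ⊆ S →
      ∫ x in Set.Icc α β, ‖u t x - u τ x‖ ≤
        2*(2*Chat+3)*lhat * (t-τ) * (eVariationOn (u τ) S).toReal := by
    intro α β S hsub
    refine (hkey α β).trans ?_
    have h1 : (eVariationOn (u τ) (Set.Icc (α-δ) (β+δ))).toReal
        ≤ (eVariationOn (u τ) S).toReal :=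
      ENNReal.toReal_mono (hVS S) (eVariationOn.mono (u τ) hsub)
    calc 2*(2*Chat+3) * δ * (eVariationOn (u τ) (Set.Icc (α-δ) (β+δ))).toReal
        ≤ 2*(2*Chat+3) * δ * (eVariationOn (u τ) S).toReal :=
          mul_le_mul_of_nonneg_left h1 (by positivity)
      _ = 2*(2*Chat+3)*lhat * (t-τ) * (eVariationOn (u τ) S).toReal := by
          rw [hδdef]; ring
  have hg0 : ∀ x, (0:ℝ) ≤ ‖u t x - u τ x‖ := fun x => norm_nonneg _
  -- case analysis on a and b
  induction a using EReal.rec with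
  | top => exact absurd hab (by simp)
  | bot =>
    induction b using EReal.rec with
    | bot => exact absurd hab (by simp)
    | top =>
      have hReq : {x : ℝ | (⊥:EReal) + (δ:EReal) ≤ (x:EReal) ∧ (x:EReal) ≤ (⊤:EReal) - (δ:EReal)}
          = Set.univ := by
        ext x; simp [EReal.bot_add, EReal.top_sub_coe]
      have hSeq : {x : ℝ | (⊥:EReal) < (x:EReal) ∧ (x:EReal) < (⊤:EReal)} = Set.univ := by
        ext x; simp
      rw [hReq, hSeq]
      apply lim_aux _ hg hg0 _ (fun k => Set.Icc (-(k:ℝ)) (k:ℝ))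
        (fun k => measurableSet_Icc)
        (fun j k hjk => Set.Icc_subset_Icc (neg_le_neg (Nat.cast_le.mpr hjk))
          (Nat.cast_le.mpr hjk))
      · rw [Set.diff_eq_empty.mpr, measure_empty]
        intro x _
        obtain ⟨k, hk⟩ := exists_nat_ge |x|
        exact Set.mem_iUnion.mpr ⟨k, ⟨by linarith [neg_abs_le x], by linarith [le_abs_self x]⟩⟩
      · intro k
        exact hstep _ _ Set.univ (Set.subset_univ _)
    | coe b₀ =>
      have hReq : {x : ℝ | (⊥:EReal) + (δ:EReal) ≤ (x:EReal) ∧ (x:EReal) ≤ (b₀:EReal) - (δ:EReal)}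
          = Set.Iic (b₀ - δ) := by
        ext x
        simp [EReal.bot_add, ← EReal.coe_sub, EReal.coe_le_coe_iff]
      have hSeq : {x : ℝ | (⊥:EReal) < (x:EReal) ∧ (x:EReal) < (b₀:EReal)} = Set.Iio b₀ := by
        ext x; simp [EReal.coe_lt_coe_iff]
      rw [hReq, hSeq]
      apply lim_aux _ hg hg0 _ (fun k => Set.Icc (-(k:ℝ)) (b₀ - δ - 1/((k:ℝ)+1)))
        (fun k => measurableSet_Icc)
      · intro j k hjk
        have h1 : 1/((k:ℝ)+1) ≤ 1/((j:ℝ)+1) :=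
          one_div_le_one_div_of_le (by positivity)
            (by have := (Nat.cast_le (α := ℝ)).mpr hjk; linarith)
        exact Set.Icc_subset_Icc (neg_le_neg (Nat.cast_le.mpr hjk)) (by linarith)
      · apply measure_mono_null _ (measure_singleton (b₀ - δ))
        intro x hx
        obtain ⟨hx1, hx2⟩ := hx
        simp only [Set.mem_setOf_eq, Set.mem_Iic] at hx1
        rcases eq_or_lt_of_le hx1 with h | h
        · exact h
        · exfalso
          apply hx2
          obtain ⟨k₁, hk₁⟩ := exists_nat_ge (-x)
          obtain ⟨k₂, hk₂⟩ := exists_nat_one_div_lt (show (0:ℝ) < b₀ - δ - x by linarith)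
          refine Set.mem_iUnion.mpr ⟨max k₁ k₂, ?_, ?_⟩
          · have : (k₁:ℝ) ≤ ((max k₁ k₂ : ℕ):ℝ) := Nat.cast_le.mpr (le_max_left _ _)
            linarith
          · have h3 : 1/(((max k₁ k₂ : ℕ):ℝ)+1) ≤ 1/((k₂:ℝ)+1) :=
              one_div_le_one_div_of_le (by positivity)
                (by have := (Nat.cast_le (α := ℝ)).mpr (le_max_right k₁ k₂); linarith)
            linarith
      · intro k
        apply hstep _ _ (Set.Iio b₀)
        intro x hx
        have h4 : (0:ℝ) < 1/((k:ℝ)+1) := by positivity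
        have := hx.2
        simp only [Set.mem_Iio]
        linarith
  | coe a₀ =>
    induction b using EReal.rec with
    | bot => exact absurd hab (by simp)
    | top =>
      have hReq : {x : ℝ | (a₀:EReal) + (δ:EReal) ≤ (x:EReal) ∧ (x:EReal) ≤ (⊤:EReal) - (δ:EReal)}
          = Set.Ici (a₀ + δ) := by
        ext x
        simp [EReal.top_sub_coe, ← EReal.coe_add, EReal.coe_le_coe_iff]
      have hSeq : {x : ℝ | (a₀:EReal) < (x:EReal) ∧ (x:EReal) < (⊤:EReal)} = Set.Ioi a₀ := by
        ext x; simp [EReal.coe_lt_coe_iff]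
      rw [hReq, hSeq]
      apply lim_aux _ hg hg0 _ (fun k => Set.Icc (a₀ + δ + 1/((k:ℝ)+1)) (k:ℝ))
        (fun k => measurableSet_Icc)
      · intro j k hjk
        refine Set.Icc_subset_Icc ?_ (Nat.cast_le.mpr hjk)
        have h1 : 1/((k:ℝ)+1) ≤ 1/((j:ℝ)+1) :=
          one_div_le_one_div_of_le (by positivity)
            (by have := (Nat.cast_le (α := ℝ)).mpr hjk; linarith)
        linarith
      · apply measure_mono_null _ (measure_singleton (a₀ + δ))
        intro x hx
        obtain ⟨hx1, hx2⟩ := hx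
        simp only [Set.mem_Ici] at hx1
        rcases eq_or_lt_of_le hx1 with h | h
        · exact h.symm
        · exfalso
          apply hx2
          obtain ⟨k₁, hk₁⟩ := exists_nat_ge x
          obtain ⟨k₂, hk₂⟩ := exists_nat_one_div_lt (show (0:ℝ) < x - (a₀ + δ) by linarith)
          refine Set.mem_iUnion.mpr ⟨max k₁ k₂, ?_, ?_⟩
          · have h3 : 1/(((max k₁ k₂ : ℕ):ℝ)+1) ≤ 1/((k₂:ℝ)+1) :=
              one_div_le_one_div_of_le (by positivity)
                (by have := (Nat.cast_le (α := ℝ)).mpr (le_max_right k₁ k₂); linarith)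
            linarith
          · have : (k₁:ℝ) ≤ ((max k₁ k₂ : ℕ):ℝ) := Nat.cast_le.mpr (le_max_left _ _)
            linarith
      · intro k
        apply hstep _ _ (Set.Ioi a₀)
        intro x hx
        have h4 : (0:ℝ) < 1/((k:ℝ)+1) := by positivity
        have := hx.1
        simp only [Set.mem_Ioi]
        linarith
    | coe b₀ =>
      have hReq : {x : ℝ | (a₀:EReal) + (δ:EReal) ≤ (x:EReal) ∧ (x:EReal) ≤ (b₀:EReal) - (δ:EReal)}
          = Set.Icc (a₀ + δ) (b₀ - δ) := by
        ext x
        simp [← EReal.coe_add, ← EReal.coe_sub, EReal.coe_le_coe_iff, Set.mem_Icc]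
      have hSeq : {x : ℝ | (a₀:EReal) < (x:EReal) ∧ (x:EReal) < (b₀:EReal)} = Set.Ioo a₀ b₀ := by
        ext x; simp [EReal.coe_lt_coe_iff]
      rw [hReq, hSeq]
      apply lim_aux _ hg hg0 _
        (fun k => Set.Icc (a₀ + δ + 1/((k:ℝ)+1)) (b₀ - δ - 1/((k:ℝ)+1)))
        (fun k => measurableSet_Icc)
      · intro j k hjk
        have h1 : 1/((k:ℝ)+1) ≤ 1/((j:ℝ)+1) :=
          one_div_le_one_div_of_le (by positivity)
            (by have := (Nat.cast_le (α := ℝ)).mpr hjk; linarith)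
        exact Set.Icc_subset_Icc (by linarith) (by linarith)
      · apply measure_mono_null _
          (measure_union_null (measure_singleton (a₀ + δ)) (measure_singleton (b₀ - δ)))
        intro x hx
        obtain ⟨hx1, hx2⟩ := hx
        obtain ⟨hxa, hxb⟩ := hx1
        rcases eq_or_lt_of_le hxa with h | h
        · exact Or.inl h.symm
        rcases eq_or_lt_of_le hxb with h' | h'
        · exact Or.inr h'
        exfalso
        apply hx2
        obtain ⟨k₁, hk₁⟩ := exists_nat_one_div_lt (show (0:ℝ) < x - (a₀ + δ) by linarith)
        obtain ⟨k₂, hk₂⟩ := exists_nat_one_div_lt (show (0:ℝ) < b₀ - δ - x by linarith)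
        refine Set.mem_iUnion.mpr ⟨max k₁ k₂, ?_, ?_⟩
        · have h3 : 1/(((max k₁ k₂ : ℕ):ℝ)+1) ≤ 1/((k₁:ℝ)+1) :=
            one_div_le_one_div_of_le (by positivity)
              (by have := (Nat.cast_le (α := ℝ)).mpr (le_max_left k₁ k₂); linarith)
          linarith
        · have h3 : 1/(((max k₁ k₂ : ℕ):ℝ)+1) ≤ 1/((k₂:ℝ)+1) :=
            one_div_le_one_div_of_le (by positivity)
              (by have := (Nat.cast_le (α := ℝ)).mpr (le_max_right k₁ k₂); linarith)
          linarith
      · intro k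
        apply hstep _ _ (Set.Ioo a₀ b₀)
        intro x hx
        have h4 : (0:ℝ) < 1/((k:ℝ)+1) := by positivity
        obtain ⟨hxl, hxr⟩ := hx
        exact ⟨by linarith, by linarith⟩
end
end

section
/- Let w : ℝ → ℝⁿ be right-continuous and of bounded variation, let a ∈ ℝ, h > 0, and define the piecewise constant sampling w̄(x) := w(a + h⌊(x−a)/h⌋) for x ≥ a. Then for every b > a, one has ∫_a^b |w(x) − w̄(x)| dx ≤ h · Tot.Var.{w; [a,b)}. -/
open MeasureTheory

noncomputable section

theorem stmt_5 (n : ℕ) (hn : 1 ≤ n)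
    (w : ℝ → EuclideanSpace ℝ (Fin n))
    (hrc : ∀ x : ℝ, ContinuousWithinAt w (Set.Ici x) x)
    (hBV : BoundedVariationOn w Set.univ)
    (a h : ℝ) (hh : 0 < h)
    -- the piecewise constant sampling of `w` on the grid `a + hℤ`
    (wbar : ℝ → EuclideanSpace ℝ (Fin n))
    (hwbar : ∀ x : ℝ, a ≤ x → wbar x = w (a + h * (⌊(x - a) / h⌋ : ℤ))) :
    ∀ b : ℝ, a < b →
      ∫ x in Set.Ioc a b, ‖w x - wbar x‖
        ≤ h * (eVariationOn w (Set.Ico a b)).toReal := by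
  intro b hab
  set g : ℝ → ℝ := fun x => a + h * (⌊(x - a) / h⌋ : ℤ) with hgdef
  set F : ℝ → ℝ := fun t => (eVariationOn w (Set.Ico a b ∩ Set.Icc a t)).toReal with hFdef
  have hfin : ∀ s : Set ℝ, eVariationOn w s ≠ ⊤ := fun s =>
    ne_top_of_le_ne_top hBV (eVariationOn.mono w (Set.subset_univ s))
  have hFmono : Monotone F := fun s t hst =>
    ENNReal.toReal_mono (hfin _)
      (eVariationOn.mono w (Set.inter_subset_inter_right _ (Set.Icc_subset_Icc_right hst)))
  set M : ℝ := (eVariationOn w Set.univ).toReal with hMdef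
  have hFle : ∀ t, F t ≤ M := fun t =>
    ENNReal.toReal_mono hBV (eVariationOn.mono w (Set.subset_univ _))
  have hFnonneg : ∀ t, 0 ≤ F t := fun t => ENNReal.toReal_nonneg
  have hgmono : Monotone g := by
    intro x y hxy
    dsimp [g]
    have hd : (x - a) / h ≤ (y - a) / h := by gcongr <;> linarith
    have : (⌊(x - a) / h⌋ : ℝ) ≤ (⌊(y - a) / h⌋ : ℝ) := by
      exact_mod_cast Int.floor_le_floor hd
    nlinarith
  set G : ℝ → ℝ := fun x => F (g x + h) - F (g x) with hGdef
  have hGnonneg : ∀ x, 0 ≤ G x := fun x => sub_nonneg.2 (hFmono (by linarith))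
  have hGmeas : Measurable G := by
    have h1 : Monotone (fun x => F (g x + h)) :=
      hFmono.comp (fun x y hxy => by simpa using hgmono hxy)
    have h2 : Monotone (fun x => F (g x)) := hFmono.comp hgmono
    exact h1.measurable.sub h2.measurable
  have hGbound : ∀ x, ‖G x‖ ≤ M := by
    intro x
    dsimp [G]
    rw [abs_le]
    constructor
    · have := hFle (g x); have := hFnonneg (g x + h); linarith
    · have := hFle (g x + h); have := hFnonneg (g x); linarith
  have hGint : ∀ s : Set ℝ, volume s < ⊤ → IntegrableOn G s volume := by
    intro s hs
    refine Integrable.mono' ((integrableOn_const_iff (C := M)).2 (Or.inr hs)) hGmeas.aestronglyMeasurable.restrict ?_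
    exact Filter.Eventually.of_forall hGbound
  -- gridpoint facts
  have hgx : ∀ x : ℝ, a ≤ x → a ≤ g x ∧ g x ≤ x ∧ x < g x + h := by
    intro x hax
    have h0 : (0:ℝ) ≤ (⌊(x - a) / h⌋ : ℝ) := by
      exact_mod_cast Int.floor_nonneg.2 (div_nonneg (by linarith) hh.le)
    have h1 : (⌊(x - a) / h⌋ : ℝ) ≤ (x - a) / h := Int.floor_le _
    have h2 : (x - a) / h < (⌊(x - a) / h⌋ : ℝ) + 1 := Int.lt_floor_add_one _
    have h1' : h * (⌊(x - a) / h⌋ : ℝ) ≤ x - a := by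
      rw [mul_comm]; exact (le_div_iff₀ hh).1 h1
    have h2' : x - a < ((⌊(x - a) / h⌋ : ℝ) + 1) * h := (div_lt_iff₀ hh).1 h2
    refine ⟨?_, ?_, ?_⟩ <;> dsimp [g] <;> nlinarith
  -- key pointwise bound
  have key : ∀ x ∈ Set.Ioo a b, ‖w x - wbar x‖ ≤ G x := by
    intro x hx
    obtain ⟨hag, hgx', hxgh⟩ := hgx x hx.1.le
    have hwb : wbar x = w (g x) := hwbar x hx.1.le
    have hsx : Set.Ico a b ∩ Set.Icc a x = Set.univ ∩ Set.Icc a x := by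
      rw [Set.univ_inter]
      exact Set.inter_eq_right.2 (fun y hy => ⟨hy.1, lt_of_le_of_lt hy.2 hx.2⟩)
    have hsc : Set.Ico a b ∩ Set.Icc a (g x) = Set.univ ∩ Set.Icc a (g x) := by
      rw [Set.univ_inter]
      exact Set.inter_eq_right.2 (fun y hy => ⟨hy.1, lt_of_le_of_lt (hy.2.trans hgx') hx.2⟩)
    have hadd := eVariationOn.Icc_add_Icc w (a := a) (b := g x) (c := x) hag hgx'
      (Set.mem_univ (g x))
    have hFadd : F (g x) + (eVariationOn w (Set.univ ∩ Set.Icc (g x) x)).toReal = F x := by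
      rw [hFdef]
      dsimp only
      rw [hsc, hsx, ← ENNReal.toReal_add (hfin _) (hfin _), hadd]
    have hedist : ‖w x - wbar x‖ ≤ (eVariationOn w (Set.univ ∩ Set.Icc (g x) x)).toReal := by
      rw [hwb, ← dist_eq_norm, dist_comm, dist_edist]
      exact ENNReal.toReal_mono (hfin _)
        (eVariationOn.edist_le w ⟨Set.mem_univ _, le_refl _, hgx'⟩
          ⟨Set.mem_univ _, hgx', le_refl _⟩)
    have hFx : F x ≤ F (g x + h) := hFmono hxgh.le
    dsimp [G]
    linarith
  -- constancy on cells
  have hcell : ∀ (k : ℕ) (x : ℝ), x ∈ Set.Ico (a + k * h) (a + (k + 1) * h) →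
      g x = a + k * h := by
    intro k x hx
    obtain ⟨hx1, hx2⟩ := hx
    have hfl : ⌊(x - a) / h⌋ = (k : ℤ) := by
      rw [Int.floor_eq_iff]
      constructor
      · rw [le_div_iff₀ hh]; push_cast; nlinarith
      · rw [div_lt_iff₀ hh]; push_cast; nlinarith
    dsimp [g]; rw [hfl]; push_cast; ring
  -- induction: integral over Ico a (a + N h)
  have hsum : ∀ N : ℕ, ∫ x in Set.Ico a (a + N * h), G x = h * (F (a + N * h) - F a) := by
    intro N
    induction N with
    | zero => simp
    | succ N ih =>
      have hle1 : a ≤ a + N * h := by nlinarith [Nat.cast_nonneg (α := ℝ) N]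
      have hle2 : a + N * h ≤ a + (N + 1 : ℕ) * h := by push_cast; nlinarith
      have hsplit : Set.Ico a (a + (N:ℝ) * h) ∪
          Set.Ico (a + (N:ℝ) * h) (a + ((N:ℕ) + 1 : ℕ) * h) = Set.Ico a (a + ((N:ℕ)+1:ℕ) * h) :=
        Set.Ico_union_Ico_eq_Ico hle1 hle2
      have hcellint : ∫ x in Set.Ico (a + (N:ℝ) * h) (a + ((N:ℕ)+1:ℕ) * h), G x
          = h * (F (a + ((N:ℕ)+1:ℕ) * h) - F (a + N * h)) := by
        have hconst : ∀ x ∈ Set.Ico (a + (N:ℝ) * h) (a + ((N:ℕ)+1:ℕ) * h),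
            G x = F (a + ((N:ℕ)+1:ℕ) * h) - F (a + N * h) := by
          intro x hx
          have hx' : x ∈ Set.Ico (a + (N:ℝ) * h) (a + ((N:ℝ) + 1) * h) := by
            push_cast at hx ⊢; exact hx
          have := hcell N x hx'
          dsimp [G]
          rw [this]
          congr 2
          push_cast; ring
        rw [setIntegral_congr_fun measurableSet_Ico hconst, setIntegral_const, measureReal_def, Real.volume_Ico,
          smul_eq_mul]
        rw [ENNReal.toReal_ofReal (by push_cast; nlinarith)]
        push_cast; ring
      rw [← hsplit, setIntegral_union (Set.Ico_disjoint_Ico_same)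
        measurableSet_Ico (hGint _ (by rw [Real.volume_Ico]; exact ENNReal.ofReal_lt_top))
        (hGint _ (by rw [Real.volume_Ico]; exact ENNReal.ofReal_lt_top)), ih, hcellint]
      ring
  set N : ℕ := (⌊(b - a) / h⌋).toNat + 1 with hNdef
  have hbN : b < a + N * h := by
    have h2 : ((⌊(b - a) / h⌋ : ℤ) : ℝ) ≤ ((⌊(b - a) / h⌋).toNat : ℝ) := by
      exact_mod_cast Int.self_le_toNat _
    have h1 : (b - a) / h < (⌊(b - a) / h⌋ : ℝ) + 1 := Int.lt_floor_add_one _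
    have h3 : (b - a) / h < (N : ℝ) := by
      rw [hNdef]; push_cast; linarith
    have := (div_lt_iff₀ hh).1 h3
    linarith
  have hFN : F (a + N * h) = (eVariationOn w (Set.Ico a b)).toReal := by
    rw [hFdef]
    dsimp only
    congr 1
    have hsub : Set.Ico a b ⊆ Set.Icc a (a + N * h) :=
      fun y hy => ⟨hy.1, le_of_lt (lt_of_lt_of_le hy.2 hbN.le)⟩
    rw [Set.inter_eq_left.2 hsub]
  have hFa : F a = 0 := by
    rw [hFdef]
    dsimp only
    rw [Set.Icc_self]
    have : eVariationOn w (Set.Ico a b ∩ {a}) = 0 :=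
      eVariationOn.subsingleton w (fun x hx y hy => by
        simp only [Set.mem_inter_iff, Set.mem_singleton_iff] at hx hy
        rw [hx.2, hy.2])
    rw [this]; simp
  calc ∫ x in Set.Ioc a b, ‖w x - wbar x‖
      = ∫ x in Set.Ioo a b, ‖w x - wbar x‖ := integral_Ioc_eq_integral_Ioo
    _ ≤ ∫ x in Set.Ioo a b, G x := by
        refine integral_mono_of_nonneg (Filter.Eventually.of_forall fun x => norm_nonneg _)
          (hGint _ (by rw [Real.volume_Ioo]; exact ENNReal.ofReal_lt_top)) ?_
        exact (ae_restrict_iff' measurableSet_Ioo).2 (Filter.Eventually.of_forall key)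
    _ ≤ ∫ x in Set.Ico a (a + N * h), G x := by
        refine setIntegral_mono_set (hGint _ (by rw [Real.volume_Ico]; exact ENNReal.ofReal_lt_top))
          (Filter.Eventually.of_forall hGnonneg) ?_
        have hsub : Set.Ioo a b ⊆ Set.Ico a (a + N * h) :=
          fun x hx => ⟨hx.1.le, hx.2.trans hbN⟩
        exact hsub.eventuallyLE
    _ = h * (F (a + N * h) - F a) := hsum N
    _ = h * (eVariationOn w (Set.Ico a b)).toReal := by rw [hFN, hFa, sub_zero]
end
end

section
/- Let f : Ω → ℝⁿ be continuous, let u⁻, u⁺ ∈ Ω, λ ∈ ℝ, and define U : ℝ × ℝ → ℝⁿ by U(t,x) = u⁻ if x < λt and U(t,x) = u⁺ if x > λt. Then U is a distributional solution of U_t + f(U)_x = 0 on ℝ × ℝ (i.e. ∬ (U·φ_t + f(U)·φ_x) dx dt = 0 for every C¹ function φ with compact support in ℝ²) if and only if the Rankine–Hugoniot condition f(u⁺) − f(u⁻) = λ(u⁺ − u⁻) holds. -/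
open MeasureTheory Set

noncomputable section

namespace RH9

set_option linter.unusedVariables false

lemma line_null (lam : ℝ) : (volume : Measure (ℝ × ℝ)) {p : ℝ × ℝ | p.2 = lam * p.1} = 0 := by
  have hm : MeasurableSet {p : ℝ × ℝ | p.2 = lam * p.1} :=
    measurableSet_eq_fun measurable_snd (measurable_fst.const_mul lam)
  rw [Measure.volume_eq_prod, Measure.prod_apply hm]
  have h : ∀ t : ℝ, (volume (Prod.mk t ⁻¹' {p : ℝ × ℝ | p.2 = lam * p.1})) = 0 := by
    intro t
    have : Prod.mk t ⁻¹' {p : ℝ × ℝ | p.2 = lam * p.1} = {lam * t} := by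
      ext x; simp [Set.mem_preimage]
    rw [this]
    exact measure_singleton _
  simp [h]


set_option linter.unusedSectionVars false
set_option maxHeartbeats 1000000

lemma integral_deriv_zero (g : ℝ → ℝ) (hg : ContDiff ℝ 1 g) (hs : HasCompactSupport g) :
    ∫ t, deriv g t = 0 := by
  have h1 := hs.integral_Iic_deriv_eq hg 0
  have h2 := hs.integral_Ioi_deriv_eq hg 0
  have hint : Integrable (deriv g) :=
    (hg.continuous_deriv le_rfl).integrable_of_hasCompactSupport hs.deriv
  rw [← intervalIntegral.integral_Iic_add_Ioi hint.integrableOn hint.integrableOn, h1, h2,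
    add_neg_cancel]

lemma restrict_prod_univ (s : Set ℝ) :
    (volume : Measure (ℝ × ℝ)).restrict ((univ : Set ℝ) ×ˢ s)
      = (volume : Measure ℝ).prod ((volume : Measure ℝ).restrict s) := by
  rw [Measure.volume_eq_prod, ← Measure.prod_restrict, Measure.restrict_univ]

variable {E : Type*} [NormedAddCommGroup E] [NormedSpace ℝ E] [CompleteSpace E]

lemma int_smul (A : ℝ × ℝ → ℝ) (hA : Integrable A) (v : ℝ × ℝ → E)
    (hv : AEStronglyMeasurable v volume) (C : ℝ) (hC : ∀ q, ‖v q‖ ≤ C) :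
    Integrable (fun q => A q • v q) := by
  apply (hA.norm.mul_const C).mono' (hA.aestronglyMeasurable.smul hv)
  filter_upwards with q
  rw [show (A • v) q = A q • v q from rfl, norm_smul]
  exact mul_le_mul_of_nonneg_left (hC q) (norm_nonneg _)

lemma key (lam : ℝ) (a b c d : E)
    (φ : ℝ × ℝ → ℝ) (hφ : ContDiff ℝ 1 φ) (hsp : HasCompactSupport φ) :
    (∫ p : ℝ × ℝ, ((fderiv ℝ φ p (1, 0)) • (if p.2 < lam * p.1 then a else b)
        + (fderiv ℝ φ p (0, 1)) • (if p.2 < lam * p.1 then c else d)))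
      = (∫ t : ℝ, φ (t, lam * t)) • ((lam • b - d) - (lam • a - c)) := by
  have hφd : Differentiable ℝ φ := hφ.differentiable one_ne_zero
  -- the shear map as a continuous linear map
  set L : (ℝ × ℝ) →L[ℝ] ℝ × ℝ :=
    (ContinuousLinearMap.fst ℝ ℝ ℝ).prod
      ((ContinuousLinearMap.snd ℝ ℝ ℝ) + lam • ContinuousLinearMap.fst ℝ ℝ ℝ) with hLdef
  have hLapp : ∀ q : ℝ × ℝ, L q = (q.1, q.2 + lam * q.1) := by
    intro q
    simp [hLdef, ContinuousLinearMap.prod_apply]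
  -- the sheared test function
  set ψ : ℝ × ℝ → ℝ := fun q => φ (q.1, q.2 + lam * q.1) with hψdef
  have hψL : ψ = φ ∘ L := by
    funext q; simp [hψdef, hLapp q, Function.comp]
  have hψc : ContDiff ℝ 1 ψ := by
    rw [hψL]; exact hφ.comp L.contDiff
  let e : Homeomorph (ℝ × ℝ) (ℝ × ℝ) :=
    { toFun := fun q => (q.1, q.2 + lam * q.1)
      invFun := fun q => (q.1, q.2 - lam * q.1)
      left_inv := fun q => by simp
      right_inv := fun q => by simp
      continuous_toFun := by fun_prop
      continuous_invFun := by fun_prop }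
  have hψs : HasCompactSupport ψ := hsp.comp_homeomorph e
  have hψd : Differentiable ℝ ψ := hψc.differentiable one_ne_zero
  -- derivative of ψ
  have hfd : ∀ q : ℝ × ℝ, fderiv ℝ ψ q = (fderiv ℝ φ (q.1, q.2 + lam * q.1)).comp L := by
    intro q
    have h1 : HasFDerivAt φ (fderiv ℝ φ (L q)) (L q) := (hφd (L q)).hasFDerivAt
    have h2 : HasFDerivAt ψ ((fderiv ℝ φ (L q)).comp L) q := by
      rw [hψL]; exact h1.comp q L.hasFDerivAt
    rw [h2.fderiv, hLapp]
  set A : ℝ × ℝ → ℝ := fun q => fderiv ℝ ψ q (1, 0) with hAdef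
  set B : ℝ × ℝ → ℝ := fun q => fderiv ℝ ψ q (0, 1) with hBdef
  have hL10 : L ((1:ℝ), (0:ℝ)) = (1, lam) := by rw [hLapp]; simp
  have hL01 : L ((0:ℝ), (1:ℝ)) = (0, 1) := by rw [hLapp]; simp
  have hsplitv : ((1:ℝ), lam) = ((1:ℝ), (0:ℝ)) + lam • ((0:ℝ), (1:ℝ)) := by
    simp [Prod.ext_iff]
  have hA : ∀ q : ℝ × ℝ, A q = fderiv ℝ φ (q.1, q.2 + lam * q.1) (1, 0)
      + lam * fderiv ℝ φ (q.1, q.2 + lam * q.1) (0, 1) := by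
    intro q
    show fderiv ℝ ψ q (1, 0) = _
    rw [hfd q, ContinuousLinearMap.comp_apply, hL10, hsplitv, map_add, _root_.map_smul, smul_eq_mul]
  have hB : ∀ q : ℝ × ℝ, B q = fderiv ℝ φ (q.1, q.2 + lam * q.1) (0, 1) := by
    intro q
    show fderiv ℝ ψ q (0, 1) = _
    rw [hfd q, ContinuousLinearMap.comp_apply, hL01]
  -- continuity / integrability of the partial derivatives
  have hAc : Continuous A := (hψc.continuous_fderiv one_ne_zero).clm_apply continuous_const
  have hBc : Continuous B := (hψc.continuous_fderiv one_ne_zero).clm_apply continuous_const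
  have hAs : HasCompactSupport A := hψs.fderiv_apply ℝ (1, 0)
  have hBs : HasCompactSupport B := hψs.fderiv_apply ℝ (0, 1)
  have hAi : Integrable A := hAc.integrable_of_hasCompactSupport hAs
  have hBi : Integrable B := hBc.integrable_of_hasCompactSupport hBs
  -- partial derivatives as 1-d derivatives
  have hAt : ∀ y t : ℝ, HasDerivAt (fun s => ψ (s, y)) (A (t, y)) t := by
    intro y t
    have h1 : HasFDerivAt ψ (fderiv ℝ ψ (t, y)) (t, y) := (hψd (t, y)).hasFDerivAt
    have h2 : HasDerivAt (fun s : ℝ => ((s, y) : ℝ × ℝ)) (1, 0) t :=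
      (hasDerivAt_id t).prodMk (hasDerivAt_const t y)
    have := h1.comp_hasDerivAt t h2; exact this
  have hBt : ∀ t y : ℝ, HasDerivAt (fun z => ψ (t, z)) (B (t, y)) y := by
    intro t y
    have h1 : HasFDerivAt ψ (fderiv ℝ ψ (t, y)) (t, y) := (hψd (t, y)).hasFDerivAt
    have h2 : HasDerivAt (fun z : ℝ => ((t, z) : ℝ × ℝ)) (0, 1) y :=
      (hasDerivAt_const y t).prodMk (hasDerivAt_id y)
    exact h1.comp_hasDerivAt y h2
  -- slices are C¹ with compact support
  have hsm1 : ∀ y : ℝ, ContDiff ℝ 1 (fun s => ψ (s, y)) := fun y =>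
    hψc.comp (contDiff_id.prodMk contDiff_const)
  have hsm2 : ∀ t : ℝ, ContDiff ℝ 1 (fun z => ψ (t, z)) := fun t =>
    hψc.comp (contDiff_const.prodMk contDiff_id)
  have hslice1 : ∀ y : ℝ, HasCompactSupport (fun s => ψ (s, y)) := by
    intro y
    apply HasCompactSupport.intro (hψs.image continuous_fst)
    intro t ht
    by_contra h
    exact ht ⟨(t, y), subset_tsupport _ h, rfl⟩
  have hslice2 : ∀ t : ℝ, HasCompactSupport (fun z => ψ (t, z)) := by
    intro t
    apply HasCompactSupport.intro (hψs.image continuous_snd)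
    intro y hy
    by_contra h
    exact hy ⟨(t, y), subset_tsupport _ h, rfl⟩
  -- 1-d integrals
  have hFTCt : ∀ y : ℝ, (∫ t : ℝ, A (t, y)) = 0 := by
    intro y
    have h : (∫ t : ℝ, A (t, y)) = ∫ t : ℝ, deriv (fun s => ψ (s, y)) t :=
      integral_congr_ae (Filter.Eventually.of_forall fun t => ((hAt y t).deriv).symm)
    rw [h]
    exact integral_deriv_zero _ (hsm1 y) (hslice1 y)
  have hFTCy1 : ∀ t : ℝ, (∫ y in Iio (0:ℝ), B (t, y)) = ψ (t, 0) := by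
    intro t
    rw [setIntegral_congr_set Iio_ae_eq_Iic]
    have h : (∫ y in Iic (0:ℝ), B (t, y)) = ∫ y in Iic (0:ℝ), deriv (fun z => ψ (t, z)) y :=
      setIntegral_congr_ae measurableSet_Iic
        (Filter.Eventually.of_forall fun y _ => ((hBt t y).deriv).symm)
    rw [h]
    exact (hslice2 t).integral_Iic_deriv_eq (hsm2 t) 0
  have hFTCy2 : ∀ t : ℝ, (∫ y in Ici (0:ℝ), B (t, y)) = - ψ (t, 0) := by
    intro t
    rw [setIntegral_congr_set (Ioi_ae_eq_Ici (a := (0:ℝ))).symm]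
    have h : (∫ y in Ioi (0:ℝ), B (t, y)) = ∫ y in Ioi (0:ℝ), deriv (fun z => ψ (t, z)) y :=
      setIntegral_congr_ae measurableSet_Ioi
        (Filter.Eventually.of_forall fun y _ => ((hBt t y).deriv).symm)
    rw [h]
    exact (hslice2 t).integral_Ioi_deriv_eq (hsm2 t) 0
  -- set integrals of A and B over half-planes
  have hconv : ∀ (s : Set ℝ) (g : ℝ × ℝ → ℝ), Integrable g volume →
      Integrable g ((volume : Measure ℝ).prod ((volume : Measure ℝ).restrict s)) := by
    intro s g hg
    rw [← restrict_prod_univ]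
    exact hg.integrableOn
  have hAzero : ∀ s : Set ℝ, (∫ q in (univ : Set ℝ) ×ˢ s, A q) = 0 := by
    intro s
    have hi := hconv s A hAi
    rw [show (∫ q in (univ : Set ℝ) ×ˢ s, A q)
        = ∫ q, A q ∂((volume : Measure ℝ).prod ((volume : Measure ℝ).restrict s)) by
      rw [restrict_prod_univ]]
    rw [← MeasureTheory.integral_prod_swap]
    rw [MeasureTheory.integral_prod (fun z : ℝ × ℝ => A z.swap) hi.swap]
    simp only [Function.comp, Prod.swap_prod_mk, hFTCt, integral_zero]
  have hB1 : (∫ q in (univ : Set ℝ) ×ˢ Iio (0:ℝ), B q) = ∫ t : ℝ, ψ (t, 0) := by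
    have hi := hconv (Iio 0) B hBi
    rw [show (∫ q in (univ : Set ℝ) ×ˢ Iio (0:ℝ), B q)
        = ∫ q, B q ∂((volume : Measure ℝ).prod ((volume : Measure ℝ).restrict (Iio 0))) by
      rw [restrict_prod_univ]]
    rw [MeasureTheory.integral_prod _ hi]
    simp only [hFTCy1]
  have hB2 : (∫ q in (univ : Set ℝ) ×ˢ Ici (0:ℝ), B q) = - ∫ t : ℝ, ψ (t, 0) := by
    have hi := hconv (Ici 0) B hBi
    rw [show (∫ q in (univ : Set ℝ) ×ˢ Ici (0:ℝ), B q)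
        = ∫ q, B q ∂((volume : Measure ℝ).prod ((volume : Measure ℝ).restrict (Ici 0))) by
      rw [restrict_prod_univ]]
    rw [MeasureTheory.integral_prod _ hi]
    simp only [hFTCy2]
    rw [integral_neg]
  -- the transported integrand
  set G : ℝ × ℝ → E := fun p => (fderiv ℝ φ p (1, 0)) • (if p.2 < lam * p.1 then a else b)
      + (fderiv ℝ φ p (0, 1)) • (if p.2 < lam * p.1 then c else d) with hGdef
  set W : ℝ × ℝ → E := fun q => A q • (if q.2 < 0 then a else b)
      + B q • (if q.2 < 0 then c - lam • a else d - lam • b) with hWdef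
  have hWG : ∀ t y : ℝ, G (t, y + lam * t) = W (t, y) := by
    intro t y
    have hcond : (y + lam * t < lam * t) ↔ y < 0 := by constructor <;> intro h <;> linarith
    have hD1 : fderiv ℝ φ (t, y + lam * t) (1, 0) = A (t, y) - lam * B (t, y) := by
      rw [hA (t, y), hB (t, y)]; ring
    have hD2 : fderiv ℝ φ (t, y + lam * t) (0, 1) = B (t, y) := (hB (t, y)).symm
    simp only [hGdef, hWdef, hD1, hD2, hcond]
    by_cases hy : y < 0
    · simp only [if_pos hy]
      rw [sub_smul, smul_sub, mul_comm, mul_smul, smul_comm]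
      abel
    · simp only [if_neg hy]
      rw [sub_smul, smul_sub, mul_comm, mul_smul, smul_comm]
      abel
  -- measurability and bounds for the piecewise constants
  have hmeasW : ∀ x y : E, AEStronglyMeasurable (fun q : ℝ × ℝ => if q.2 < (0:ℝ) then x else y)
      volume := by
    intro x y
    exact ((stronglyMeasurable_const.ite
      (measurableSet_lt measurable_snd measurable_const) stronglyMeasurable_const)).aestronglyMeasurable
  have hmeasG : ∀ x y : E,
      AEStronglyMeasurable (fun q : ℝ × ℝ => if q.2 < lam * q.1 then x else y) volume := by
    intro x y
    exact ((stronglyMeasurable_const.ite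
      (measurableSet_lt measurable_snd (measurable_fst.const_mul lam))
      stronglyMeasurable_const)).aestronglyMeasurable
  have hbnd : ∀ (x y : E) (Q : Prop) [Decidable Q], ‖if Q then x else y‖ ≤ max ‖x‖ ‖y‖ := by
    intro x y Q _
    split_ifs
    exacts [le_max_left _ _, le_max_right _ _]
  -- integrability of G and W
  have hD1c : Continuous (fun p : ℝ × ℝ => fderiv ℝ φ p (1, 0)) :=
    (hφ.continuous_fderiv one_ne_zero).clm_apply continuous_const
  have hD2c : Continuous (fun p : ℝ × ℝ => fderiv ℝ φ p (0, 1)) :=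
    (hφ.continuous_fderiv one_ne_zero).clm_apply continuous_const
  have hD1i : Integrable (fun p : ℝ × ℝ => fderiv ℝ φ p (1, 0)) :=
    hD1c.integrable_of_hasCompactSupport (hsp.fderiv_apply ℝ (1, 0))
  have hD2i : Integrable (fun p : ℝ × ℝ => fderiv ℝ φ p (0, 1)) :=
    hD2c.integrable_of_hasCompactSupport (hsp.fderiv_apply ℝ (0, 1))
  have hGi : Integrable G := by
    rw [hGdef]
    exact (int_smul _ hD1i _ (hmeasG a b) _ (fun q => hbnd a b _)).add
      (int_smul _ hD2i _ (hmeasG c d) _ (fun q => hbnd c d _))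
  have hWi : Integrable W := by
    rw [hWdef]
    exact (int_smul _ hAi _ (hmeasW a b) _ (fun q => hbnd a b _)).add
      (int_smul _ hBi _ (hmeasW (c - lam • a) (d - lam • b)) _
        (fun q => hbnd (c - lam • a) (d - lam • b) _))
  -- change of variables: ∫ G = ∫ W
  have hGW : (∫ p : ℝ × ℝ, G p) = ∫ p : ℝ × ℝ, W p := by
    calc (∫ p : ℝ × ℝ, G p)
        = ∫ p : ℝ × ℝ, G p ∂((volume : Measure ℝ).prod volume) := by
          rw [← Measure.volume_eq_prod]
      _ = ∫ t : ℝ, ∫ x : ℝ, G (t, x) := by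
          rw [MeasureTheory.integral_prod _ (by rw [← Measure.volume_eq_prod]; exact hGi)]
      _ = ∫ t : ℝ, ∫ y : ℝ, W (t, y) := by
          congr 1
          funext t
          rw [← integral_add_right_eq_self (fun x => G (t, x)) (lam * t)]
          congr 1
          funext y
          exact hWG t y
      _ = ∫ p : ℝ × ℝ, W p ∂((volume : Measure ℝ).prod volume) :=
          (MeasureTheory.integral_prod _ (by rw [← Measure.volume_eq_prod]; exact hWi)).symm
      _ = ∫ p : ℝ × ℝ, W p := by rw [← Measure.volume_eq_prod]
  -- split ∫ W in two half-planes
  have hdisj : Disjoint ((univ : Set ℝ) ×ˢ Iio (0:ℝ)) ((univ : Set ℝ) ×ˢ Ici (0:ℝ)) := by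
    rw [Set.disjoint_left]
    rintro q ⟨-, hq1⟩ h
    exact absurd (mem_Ici.mp h.2) (not_le.mpr hq1)
  have hunion : ((univ : Set ℝ) ×ˢ Iio (0:ℝ)) ∪ ((univ : Set ℝ) ×ˢ Ici (0:ℝ))
      = (univ : Set (ℝ × ℝ)) := by
    ext q
    simp [Set.mem_prod, lt_or_ge q.2 0]
  have hWsplit : (∫ p : ℝ × ℝ, W p)
      = (∫ p in (univ : Set ℝ) ×ˢ Iio (0:ℝ), W p)
        + ∫ p in (univ : Set ℝ) ×ˢ Ici (0:ℝ), W p := by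
    rw [← setIntegral_union hdisj (MeasurableSet.univ.prod measurableSet_Ici)
      hWi.integrableOn hWi.integrableOn, hunion, setIntegral_univ]
  -- evaluate the two half-plane integrals
  have hW1 : (∫ p in (univ : Set ℝ) ×ˢ Iio (0:ℝ), W p)
      = (∫ t : ℝ, ψ (t, 0)) • (c - lam • a) := by
    have hcg : ∀ p ∈ (univ : Set ℝ) ×ˢ Iio (0:ℝ), W p = A p • a + B p • (c - lam • a) := by
      rintro p ⟨-, hp⟩
      simp only [hWdef, if_pos (show p.2 < 0 from hp)]
    rw [setIntegral_congr_fun (MeasurableSet.univ.prod measurableSet_Iio) hcg,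
      integral_add ((hAi.smul_const a).integrableOn) ((hBi.smul_const _).integrableOn),
      integral_smul_const, integral_smul_const, hAzero, hB1, zero_smul, zero_add]
  have hW2 : (∫ p in (univ : Set ℝ) ×ˢ Ici (0:ℝ), W p)
      = - ((∫ t : ℝ, ψ (t, 0)) • (d - lam • b)) := by
    have hcg : ∀ p ∈ (univ : Set ℝ) ×ˢ Ici (0:ℝ), W p = A p • b + B p • (d - lam • b) := by
      rintro p ⟨-, hp⟩
      simp only [hWdef, if_neg (not_lt.mpr (show (0:ℝ) ≤ p.2 from hp))]
    rw [setIntegral_congr_fun (MeasurableSet.univ.prod measurableSet_Ici) hcg,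
      integral_add ((hAi.smul_const b).integrableOn) ((hBi.smul_const _).integrableOn),
      integral_smul_const, integral_smul_const, hAzero, hB2, zero_smul, zero_add, neg_smul]
  have hψφ : (∫ t : ℝ, ψ (t, 0)) = ∫ t : ℝ, φ (t, lam * t) := by
    simp only [hψdef, zero_add]
  rw [show (∫ p : ℝ × ℝ, ((fderiv ℝ φ p (1, 0)) • (if p.2 < lam * p.1 then a else b)
        + (fderiv ℝ φ p (0, 1)) • (if p.2 < lam * p.1 then c else d))) = ∫ p : ℝ × ℝ, G p from rfl,
    hGW, hWsplit, hW1, hW2, hψφ, ← smul_neg, ← smul_add]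
  congr 1
  abel

end RH9

theorem stmt_9 (n : ℕ) (hn : 1 ≤ n)
    (Ω : Set (EuclideanSpace ℝ (Fin n)))
    (f : EuclideanSpace ℝ (Fin n) → EuclideanSpace ℝ (Fin n))
    (hf : ContinuousOn f Ω)
    (um up : EuclideanSpace ℝ (Fin n)) (hum : um ∈ Ω) (hup : up ∈ Ω)
    (lam : ℝ)
    (U : ℝ × ℝ → EuclideanSpace ℝ (Fin n))
    (hUm : ∀ t x : ℝ, x < lam * t → U (t, x) = um)
    (hUp : ∀ t x : ℝ, lam * t < x → U (t, x) = up) :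
    (∀ φ : ℝ × ℝ → ℝ, ContDiff ℝ 1 φ → HasCompactSupport φ →
      (∫ p : ℝ × ℝ, ((fderiv ℝ φ p (1, 0)) • U p
          + (fderiv ℝ φ p (0, 1)) • f (U p))) = 0)
    ↔ f up - f um = lam • (up - um) := by
  have hae : ∀ᵐ p : ℝ × ℝ, p ∉ {p : ℝ × ℝ | p.2 = lam * p.1} := by
    rw [ae_iff]
    simpa using RH9.line_null lam
  have hcong : ∀ φ : ℝ × ℝ → ℝ,
      (∫ p : ℝ × ℝ, ((fderiv ℝ φ p (1, 0)) • U p + (fderiv ℝ φ p (0, 1)) • f (U p)))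
      = ∫ p : ℝ × ℝ, ((fderiv ℝ φ p (1, 0)) • (if p.2 < lam * p.1 then um else up)
          + (fderiv ℝ φ p (0, 1)) • (if p.2 < lam * p.1 then f um else f up)) := by
    intro φ
    apply integral_congr_ae
    filter_upwards [hae] with p hp
    rcases lt_trichotomy p.2 (lam * p.1) with h | h | h
    · rw [show U p = um from (by rcases p with ⟨t, x⟩; exact hUm t x h)]; simp [h]
    · exact absurd h hp
    · rw [show U p = up from (by rcases p with ⟨t, x⟩; exact hUp t x h)]; simp [not_lt.mpr h.le]
  constructor
  · intro H
    let η : ContDiffBump (0:ℝ) := ⟨1, 2, one_pos, one_lt_two⟩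
    set φ₀ : ℝ × ℝ → ℝ := fun p => η p.1 * η (p.2 - lam * p.1) with hφ₀
    have hφ₀c : ContDiff ℝ 1 φ₀ :=
      (η.contDiff.comp contDiff_fst).mul
        (η.contDiff.comp (contDiff_snd.sub (contDiff_const.mul contDiff_fst)))
    have hK : IsCompact ((fun q : ℝ × ℝ => (q.1, q.2 + lam * q.1)) ''
        (tsupport (η : ℝ → ℝ) ×ˢ tsupport (η : ℝ → ℝ))) :=
      (η.hasCompactSupport.prod η.hasCompactSupport).image (by fun_prop)
    have hφ₀s : HasCompactSupport φ₀ := by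
      apply HasCompactSupport.intro hK
      intro p hp
      by_contra h
      obtain ⟨h1, h2⟩ := mul_ne_zero_iff.mp h
      exact hp ⟨(p.1, p.2 - lam * p.1),
        ⟨subset_tsupport _ h1, subset_tsupport _ h2⟩, by simp⟩
    have h0 := H φ₀ hφ₀c hφ₀s
    rw [hcong φ₀, RH9.key lam um up (f um) (f up) φ₀ hφ₀c hφ₀s] at h0
    have hη0 : η (0:ℝ) = 1 := η.one_of_mem_closedBall (Metric.mem_closedBall_self (by norm_num))
    have hval : ∀ t : ℝ, φ₀ (t, lam * t) = η t := by
      intro t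
      rw [hφ₀]
      simp only []
      rw [show lam * t - lam * t = 0 by ring, hη0, mul_one]
    have hpos : (0:ℝ) < ∫ t : ℝ, φ₀ (t, lam * t) := by
      simp_rw [hval]
      exact η.integral_pos
    have hv := (smul_eq_zero.mp h0).resolve_left (ne_of_gt hpos)
    have hrw : f up - f um - lam • (up - um)
        = -((lam • up - f up) - (lam • um - f um)) := by
      rw [smul_sub]; abel
    have h2 : f up - f um - lam • (up - um) = 0 := by rw [hrw, hv, neg_zero]
    exact sub_eq_zero.mp h2
  · intro hRH φ hφ hs
    rw [hcong φ, RH9.key lam um up (f um) (f up) φ hφ hs]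
    have hz : (lam • up - f up) - (lam • um - f um)
        = lam • (up - um) - (f up - f um) := by
      rw [smul_sub]; abel
    rw [hz, hRH, sub_self, smul_zero]
end
end
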